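/- If p and q are distinct prime numbers, both congruent to 3 modulo 4, then the quaternion algebras (−1, p) and (−1, q) over ℚ are not isomorphic as ℚ-algebras. -/

import Mathlib

-- two squares lemma
lemma aux_two_sq {p : ℕ} (hp : p.Prime) (hp4 : p % 4 = 3) {Z W : ℤ}
    (h : (p:ℤ) ∣ Z^2 + W^2) : (p:ℤ) ∣ Z ∧ (p:ℤ) ∣ W := by
  haveI : Fact p.Prime := ⟨hp⟩
  have h0 : ((Z:ZMod p))^2 + (W:ZMod p)^2 = 0 := by
    have := (ZMod.intCast_zmod_eq_zero_iff_dvd _ p).2 h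
    push_cast at this
    linear_combination this
  by_cases hW : (W : ZMod p) = 0
  · have hZ : (Z : ZMod p) = 0 := by
      have h2 : (Z:ZMod p)^2 = 0 := by rw [hW] at h0; simpa using h0
      exact pow_eq_zero_iff (two_ne_zero) |>.1 h2
    exact ⟨(ZMod.intCast_zmod_eq_zero_iff_dvd _ p).1 hZ,
      (ZMod.intCast_zmod_eq_zero_iff_dvd _ p).1 hW⟩
  · exfalso
    have hsq : IsSquare (-1 : ZMod p) := by
      refine ⟨(Z:ZMod p) * (W:ZMod p)⁻¹, ?_⟩
      field_simp
      linear_combination -h0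
    rw [ZMod.exists_sq_eq_neg_one_iff] at hsq
    exact hsq hp4

lemma aux_descent {p : ℕ} (hp : p.Prime) (hp4 : p % 4 = 3) (q : ℤ) :
    ∀ (n : ℕ) (N Y Z W : ℤ), N.natAbs ≤ n → N ≠ 0 →
      q * N^2 = -Y^2 + (p:ℤ)*(Z^2+W^2) → IsSquare (-(q : ZMod p)) := by
  haveI : Fact p.Prime := ⟨hp⟩
  intro n
  induction n with
  | zero =>
    intro N Y Z W hle hN _
    exact absurd (Int.natAbs_eq_zero.1 (Nat.le_zero.1 hle)) hN
  | succ n ih =>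
    intro N Y Z W hle hN heq
    by_cases hdvd : (p:ℤ) ∣ N
    · -- descend
      obtain ⟨N', rfl⟩ := hdvd
      have hN' : N' ≠ 0 := by rintro rfl; simp at hN
      have hp0 : (p:ℤ) ≠ 0 := by exact_mod_cast hp.ne_zero
      have hYd : (p:ℤ) ∣ Y := by
        have h2 : (p:ℤ) ∣ Y^2 := ⟨(Z^2+W^2) - q*p*N'^2, by linear_combination heq⟩
        exact (Int.Prime.dvd_pow' (by exact_mod_cast hp) h2)
      obtain ⟨Y', rfl⟩ := hYd
      have hZW : (p:ℤ) ∣ Z^2 + W^2 := by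
        refine ⟨q*N'^2 + Y'^2, mul_left_cancel₀ hp0 ?_⟩
        linear_combination -heq
      obtain ⟨hZd, hWd⟩ := aux_two_sq hp hp4 hZW
      obtain ⟨Z', rfl⟩ := hZd
      obtain ⟨W', rfl⟩ := hWd
      have heq' : q * N'^2 = -Y'^2 + (p:ℤ)*(Z'^2+W'^2) := by
        have h3 : (p:ℤ)^2 * (q * N'^2) = (p:ℤ)^2 * (-Y'^2 + (p:ℤ)*(Z'^2+W'^2)) := by
          linear_combination heq
        exact mul_left_cancel₀ (pow_ne_zero 2 hp0) h3
      have hlt : N'.natAbs ≤ n := by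
        have h2 : 2 ≤ p := hp.two_le
        have habs : ((p:ℤ) * N').natAbs = p * N'.natAbs := by
          rw [Int.natAbs_mul, Int.natAbs_natCast]
        rw [habs] at hle
        have hmul : 2 * N'.natAbs ≤ p * N'.natAbs := Nat.mul_le_mul_right _ h2
        have hpos : 1 ≤ N'.natAbs := Nat.one_le_iff_ne_zero.2 (Int.natAbs_ne_zero.2 hN')
        omega
      exact ih N' Y' Z' W' hlt hN' heq'
    · -- N invertible mod p
      have hN0 : (N : ZMod p) ≠ 0 := fun h =>
        hdvd ((ZMod.intCast_zmod_eq_zero_iff_dvd _ _).1 h)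
      have hmod : (q : ZMod p) * (N:ZMod p)^2 = -(Y:ZMod p)^2 := by
        have := congrArg (fun x : ℤ => (x : ZMod p)) heq
        push_cast at this
        rw [ZMod.natCast_self] at this
        linear_combination this
      refine ⟨(Y:ZMod p) * (N:ZMod p)⁻¹, ?_⟩
      field_simp
      linear_combination -hmod

lemma aux_iso {p q : ℕ} (hq : q.Prime)
    (φ : QuaternionAlgebra ℚ (-1) 0 (p:ℚ) ≃ₐ[ℚ] QuaternionAlgebra ℚ (-1) 0 (q:ℚ)) :
    ∃ y z w : ℚ, (q:ℚ) = -y^2 + (p:ℚ)*(z^2+w^2) := by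
  set j : QuaternionAlgebra ℚ (-1) 0 (q:ℚ) := ⟨0,0,1,0⟩ with hj
  have hj2 : j * j = algebraMap ℚ _ (q:ℚ) := by
    rw [QuaternionAlgebra.coe_algebraMap]
    ext <;> simp [hj, QuaternionAlgebra.re_mul, QuaternionAlgebra.imI_mul,
      QuaternionAlgebra.imJ_mul, QuaternionAlgebra.imK_mul]
  set x := φ.symm j with hx
  have hx2 : x * x = algebraMap ℚ _ (q:ℚ) := by
    rw [hx, ← map_mul, hj2, AlgEquiv.commutes]
  set t := x.re with hht
  set y := x.imI with hhy
  set z := x.imJ with hhz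
  set w := x.imK with hhw
  have h1 : t*t + (-1)*y*y + (p:ℚ)*(z*z) - (-1)*(p:ℚ)*(w*w) = (q:ℚ) := by
    have := congrArg QuaternionAlgebra.re hx2
    simp only [QuaternionAlgebra.re_mul, QuaternionAlgebra.coe_algebraMap,
      QuaternionAlgebra.re_coe] at this
    linear_combination this
  have h2 : t*y + y*t - (p:ℚ)*(z*w) + (p:ℚ)*(w*z) = 0 := by
    have := congrArg QuaternionAlgebra.imI hx2
    simp only [QuaternionAlgebra.imI_mul, QuaternionAlgebra.coe_algebraMap,
      QuaternionAlgebra.imI_coe] at this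
    linear_combination this
  have h3 : t*z + (-1)*(y*w) + z*t - (-1)*(w*y) = 0 := by
    have := congrArg QuaternionAlgebra.imJ hx2
    simp only [QuaternionAlgebra.imJ_mul, QuaternionAlgebra.coe_algebraMap,
      QuaternionAlgebra.imJ_coe] at this
    linear_combination this
  by_cases ht : t = 0
  · exact ⟨y, z, w, by rw [ht] at h1; linear_combination -h1⟩
  · exfalso
    have hy : y = 0 := by
      have : t * y * 2 = 0 := by linear_combination h2
      have := mul_eq_zero.1 this
      rcases this with h | h
      · rcases mul_eq_zero.1 h with h' | h'
        · exact absurd h' ht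
        · exact h'
      · norm_num at h
    have h4 : t*w + (q:ℚ)*(y*z) + w*t - (q:ℚ)*(z*y) = 0 := by
      have := congrArg QuaternionAlgebra.imK hx2
      simp only [QuaternionAlgebra.imK_mul, QuaternionAlgebra.coe_algebraMap,
        QuaternionAlgebra.imK_coe] at this
      linear_combination this
    have hz : z = 0 := by
      have h5 : t * z * 2 = 0 := by linear_combination h3
      rcases mul_eq_zero.1 h5 with h | h
      · rcases mul_eq_zero.1 h with h' | h'
        · exact absurd h' ht
        · exact h'
      · norm_num at h
    have hw : w = 0 := by
      have h5 : t * w * 2 = 0 := by linear_combination h4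
      rcases mul_eq_zero.1 h5 with h | h
      · rcases mul_eq_zero.1 h with h' | h'
        · exact absurd h' ht
        · exact h'
      · norm_num at h
    have htq : t * t = (q:ℚ) := by
      rw [hy, hz, hw] at h1; linear_combination h1
    have hirr : Irrational (Real.sqrt q) := hq.irrational_sqrt
    apply hirr
    refine ⟨|t|, ?_⟩
    have h6 : ((t:ℝ))^2 = (q:ℝ) := by
      have := congrArg (fun r : ℚ => (r : ℝ)) htq
      push_cast at this
      linear_combination this
    rw [← h6, Real.sqrt_sq_eq_abs]
    push_cast
    rfl


lemma aux_num_eq (y : ℚ) : (y.num : ℚ) = y * (y.den : ℚ) := by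
  have h := Rat.num_div_den y
  have hd : ((y.den : ℚ)) ≠ 0 := by exact_mod_cast y.den_ne_zero
  exact (div_eq_iff hd).1 h

lemma aux_sq {p q : ℕ} (hp : p.Prime) (hq : q.Prime) (hp4 : p % 4 = 3)
    (φ : QuaternionAlgebra ℚ (-1) 0 (p:ℚ) ≃ₐ[ℚ] QuaternionAlgebra ℚ (-1) 0 (q:ℚ)) :
    IsSquare (-(q : ZMod p)) := by
  obtain ⟨y, z, w, hr⟩ := aux_iso hq φ
  set D : ℤ := (y.den : ℤ) * z.den * w.den with hD
  have hD0 : D ≠ 0 := by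
    simp only [hD]
    positivity
  set Y : ℤ := y.num * z.den * w.den with hYd
  set Z : ℤ := (y.den : ℤ) * z.num * w.den with hZd
  set W : ℤ := (y.den : ℤ) * z.den * w.num with hWd
  have key : (q:ℤ) * D^2 = -Y^2 + (p:ℤ)*(Z^2+W^2) := by
    have h9 : (q:ℚ) * (D:ℚ)^2 = -(Y:ℚ)^2 + (p:ℚ)*((Z:ℚ)^2+(W:ℚ)^2) := by
      rw [hYd, hZd, hWd, hD]
      push_cast
      rw [aux_num_eq y, aux_num_eq z, aux_num_eq w]
      linear_combination ((y.den:ℚ)*(z.den:ℚ)*(w.den:ℚ))^2 * hr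
    exact_mod_cast h9
  have hsq := aux_descent hp hp4 (q:ℤ) D.natAbs D Y Z W le_rfl hD0 key
  simpa using hsq

lemma aux_nonsq {p q : ℕ} (hp : p.Prime) (hq : q.Prime) (hne : p ≠ q)
    (hp4 : p % 4 = 3) (hA : IsSquare (-(q : ZMod p))) : ¬ IsSquare (q : ZMod p) := by
  haveI : Fact p.Prime := ⟨hp⟩
  haveI : Fact q.Prime := ⟨hq⟩
  intro h
  have hq0 : (q : ZMod p) ≠ 0 := ZMod.prime_ne_zero p q hne
  obtain ⟨a, ha⟩ := hA
  obtain ⟨b, hb⟩ := h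
  have hsq : IsSquare (-1 : ZMod p) := by
    refine ⟨a * b * ((q:ZMod p))⁻¹, ?_⟩
    field_simp
    linear_combination ((b:ZMod p)*b) * ha - ((q:ZMod p)) * hb
  rw [ZMod.exists_sq_eq_neg_one_iff] at hsq
  exact hsq hp4

theorem stmt_2 (p q : ℕ) (hp : p.Prime) (hq : q.Prime) (hne : p ≠ q)
    (hpmod : p % 4 = 3) (hqmod : q % 4 = 3) :
    IsEmpty (QuaternionAlgebra ℚ (-1) 0 (p : ℚ) ≃ₐ[ℚ] QuaternionAlgebra ℚ (-1) 0 (q : ℚ)) := by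
  constructor
  intro φ
  haveI : Fact p.Prime := ⟨hp⟩
  haveI : Fact q.Prime := ⟨hq⟩
  have hA : IsSquare (-(q : ZMod p)) := aux_sq hp hq hpmod φ
  have hB : IsSquare (-(p : ZMod q)) := aux_sq hq hp hqmod φ.symm
  have h1 : ¬ IsSquare (q : ZMod p) := aux_nonsq hp hq hne hpmod hA
  have h2 : ¬ IsSquare (p : ZMod q) := aux_nonsq hq hp hne.symm hqmod hB
  have hiff := ZMod.exists_sq_eq_prime_iff_of_mod_four_eq_three hpmod hqmod hne
  exact h1 (hiff.2 h2)
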